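/- arXiv:cs/0510060 — 4 statements merged into one kernel-verified Lean document; each statement's English description precedes it below -/
import Mathlib

section
/- Let n be a positive integer, let ν : Fin n → ℝ with ν i > 0 for all i, and let P > 0. Suppose ξ > 0 satisfies ∑_{i} max(0, ξ − 1/ν_i) = P. Then for every p : Fin n → ℝ with p_i ≥ 0 for all i and ∑_i p_i ≤ P, one has ∑_i log(1 + p_i ν_i) ≤ ∑_i log(1 + max(0, ξ − 1/ν_i) ν_i), and moreover ∑_i log(1 + max(0, ξ − 1/ν_i) ν_i) = ∑_{i : ξ ν_i ≥ 1} log(ξ ν_i). (Water-filling: the power allocation p_i = max(0, ξ − 1/ν_i) maximizes the total rate ∑ log(1 + p_i ν_i) under the total power constraint.) -/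
open Finset

lemma wf_key (ν ξ p : ℝ) (hν : 0 < ν) (hξ : 0 < ξ) (hp : 0 ≤ p) :
    Real.log (1 + p * ν) ≤ Real.log (1 + max 0 (ξ - 1 / ν) * ν) + (p - max 0 (ξ - 1 / ν)) / ξ := by
  set q := max 0 (ξ - 1 / ν) with hq
  have hq0 : 0 ≤ q := le_max_left _ _
  have hA : 0 < 1 + p * ν := by positivity
  have hB : 0 < 1 + q * ν := by positivity
  have hlog : Real.log (1 + p * ν) - Real.log (1 + q * ν) ≤ ν * (p - q) / (1 + q * ν) := by
    have := Real.log_le_sub_one_of_pos (show 0 < (1 + p * ν) / (1 + q * ν) by positivity)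
    rw [Real.log_div (ne_of_gt hA) (ne_of_gt hB)] at this
    have h2 : (1 + p * ν) / (1 + q * ν) - 1 = ν * (p - q) / (1 + q * ν) := by
      field_simp; ring
    linarith [this, h2.ge, h2.le]
  have hmain : ν * (p - q) / (1 + q * ν) ≤ (p - q) / ξ := by
    rcases le_or_gt 1 (ξ * ν) with hc | hc
    · have hqe : q = ξ - 1 / ν := by
        rw [hq, max_eq_right]
        rw [sub_nonneg, div_le_iff₀ hν]
        linarith
      have hBe : 1 + q * ν = ξ * ν := by
        rw [hqe]; field_simp; ring
      rw [hBe]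
      rw [div_le_div_iff₀ (by positivity) hξ]
      ring_nf
      nlinarith
    · have hqe : q = 0 := by
        rw [hq, max_eq_left]
        rw [sub_nonpos, le_div_iff₀ hν]
        nlinarith
      rw [hqe]
      simp only [sub_zero, zero_mul, add_zero, div_one]
      rw [le_div_iff₀ hξ]
      nlinarith
  linarith

/-- **Water-filling for parallel Gaussian channels.**
Given channel gains `ν i > 0` and total power `P > 0`, if the water level `ξ > 0`
satisfies `∑ i, max 0 (ξ - 1/ν i) = P`, then the allocation `p i = max 0 (ξ - 1/ν i)`
maximizes `∑ i, log (1 + p i * ν i)` among all nonnegative allocations of total power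
at most `P`, and the optimal value is `∑_{i : ξ ν i ≥ 1} log (ξ ν i)`. -/
theorem waterfilling_optimal
    (n : ℕ) (hn : 0 < n) (ν : Fin n → ℝ) (hν : ∀ i, 0 < ν i)
    (P : ℝ) (hP : 0 < P) (ξ : ℝ) (hξ : 0 < ξ)
    (hlevel : ∑ i, max 0 (ξ - 1 / ν i) = P) :
    (∀ p : Fin n → ℝ, (∀ i, 0 ≤ p i) → ∑ i, p i ≤ P →
      ∑ i, Real.log (1 + p i * ν i) ≤
        ∑ i, Real.log (1 + max 0 (ξ - 1 / ν i) * ν i)) ∧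
    ∑ i, Real.log (1 + max 0 (ξ - 1 / ν i) * ν i) =
      ∑ i ∈ Finset.univ.filter (fun i => 1 ≤ ξ * ν i), Real.log (ξ * ν i) := by
  constructor
  · intro p hp hsum
    have key : ∀ i ∈ Finset.univ, Real.log (1 + p i * ν i) ≤
        Real.log (1 + max 0 (ξ - 1 / ν i) * ν i) + (p i - max 0 (ξ - 1 / ν i)) / ξ :=
      fun i _ => wf_key (ν i) ξ (p i) (hν i) hξ (hp i)
    calc ∑ i, Real.log (1 + p i * ν i)
        ≤ ∑ i, (Real.log (1 + max 0 (ξ - 1 / ν i) * ν i) + (p i - max 0 (ξ - 1 / ν i)) / ξ) :=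
          Finset.sum_le_sum key
      _ = ∑ i, Real.log (1 + max 0 (ξ - 1 / ν i) * ν i)
            + (∑ i, p i - ∑ i, max 0 (ξ - 1 / ν i)) / ξ := by
          rw [Finset.sum_add_distrib, ← Finset.sum_div, Finset.sum_sub_distrib]
      _ ≤ ∑ i, Real.log (1 + max 0 (ξ - 1 / ν i) * ν i) := by
          have : (∑ i, p i - ∑ i, max 0 (ξ - 1 / ν i)) / ξ ≤ 0 := by
            apply div_nonpos_of_nonpos_of_nonneg _ hξ.le
            rw [hlevel]; linarith
          linarith
  · rw [← Finset.sum_filter_add_sum_filter_not Finset.univ (fun i => 1 ≤ ξ * ν i)]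
    have h1 : ∀ i ∈ Finset.univ.filter (fun i => 1 ≤ ξ * ν i),
        Real.log (1 + max 0 (ξ - 1 / ν i) * ν i) = Real.log (ξ * ν i) := by
      intro i hi
      rw [Finset.mem_filter] at hi
      have hν' := hν i
      have hqe : max 0 (ξ - 1 / ν i) = ξ - 1 / ν i := by
        rw [max_eq_right]
        rw [sub_nonneg, div_le_iff₀ hν']
        linarith [hi.2]
      rw [hqe]
      congr 1
      field_simp
      ring
    have h2 : ∀ i ∈ Finset.univ.filter (fun i => ¬ 1 ≤ ξ * ν i),
        Real.log (1 + max 0 (ξ - 1 / ν i) * ν i) = 0 := by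
      intro i hi
      rw [Finset.mem_filter] at hi
      have hν' := hν i
      have hqe : max 0 (ξ - 1 / ν i) = 0 := by
        rw [max_eq_left]
        rw [sub_nonpos, le_div_iff₀ hν']
        nlinarith [hi.2, not_le.mp hi.2]
      rw [hqe]
      simp
    rw [Finset.sum_congr rfl h1, Finset.sum_congr rfl h2]
    simp
end

section
/- Let f : ℝ → ℝ be a measurable nonnegative function with f(λ) = 0 for λ ≤ 0 and ∫_{0}^{∞} f(λ) dλ = 1, let μ be the probability measure on ℝ with density f with respect to Lebesgue measure, and let ξ > 0. Define g : ℝ → ℝ by g(λ) = max(0, ξ − 1/λ) for λ > 0 and g(λ) = 0 for λ ≤ 0. Then the pushforward measure of μ under g equals μ((−∞, 1/ξ]) · δ_0 + ν, where δ_0 is the Dirac measure at 0 and ν is the measure on ℝ with Lebesgue density γ ↦ f(1/(ξ − γ))/(ξ − γ)² for γ ∈ (0, ξ) and 0 elsewhere. -/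
open MeasureTheory Set

lemma lintegral_image_1d {s : Set ℝ} {ψ ψd : ℝ → ℝ} (hs : MeasurableSet s)
    (hψ' : ∀ x ∈ s, HasDerivWithinAt ψ (ψd x) s x) (hinj : Set.InjOn ψ s) (h : ℝ → ENNReal) :
    ∫⁻ x in ψ '' s, h x = ∫⁻ x in s, ENNReal.ofReal |ψd x| * h (ψ x) := by
  simpa only [ContinuousLinearMap.det_toSpanSingleton] using
    lintegral_image_eq_lintegral_abs_det_fderiv_mul volume hs
      (fun x hx => (hψ' x hx).hasFDerivWithinAt) hinj h

/-- **Distribution of the per-eigenvector transmit power under water-filling.**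
If the channel gain `λ` has probability density `f` supported on `(0, ∞)` and the
transmit power is `g(λ) = max 0 (ξ - 1/λ)` (for `λ > 0`, and `0` otherwise), then the
law of the transmit power is `F(1/ξ) δ₀ + ν`, where `ν` has Lebesgue density
`γ ↦ f(1/(ξ - γ))/(ξ - γ)²` on `(0, ξ)` and `0` elsewhere. -/
theorem waterfilling_power_distribution
    (f : ℝ → ℝ) (hf_meas : Measurable f) (hf_nonneg : ∀ x, 0 ≤ f x)
    (hf_zero : ∀ x ≤ (0 : ℝ), f x = 0)
    (hf_prob : ∫ l in Set.Ioi (0 : ℝ), f l = 1)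
    (ξ : ℝ) (hξ : 0 < ξ)
    (μ : Measure ℝ) (hμ : μ = volume.withDensity (fun l => ENNReal.ofReal (f l)))
    (g : ℝ → ℝ) (hg : ∀ l : ℝ, g l = if 0 < l then max 0 (ξ - 1 / l) else 0) :
    Measure.map g μ =
      μ (Set.Iic (1 / ξ)) • Measure.dirac (0 : ℝ) +
        volume.withDensity (fun p =>
          if 0 < p ∧ p < ξ then ENNReal.ofReal (f (1 / (ξ - p)) / (ξ - p) ^ 2) else 0) := by
  subst hμ
  set ρ : ℝ → ENNReal := fun l => ENNReal.ofReal (f l) with hρ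
  have hρ_meas : Measurable ρ := hf_meas.ennreal_ofReal
  have hg_eq : g = fun l => if 0 < l then max 0 (ξ - 1 / l) else 0 := funext hg
  have hg_meas : Measurable g := by
    rw [hg_eq]
    exact Measurable.ite measurableSet_Ioi
      (measurable_const.max (measurable_const.sub (measurable_const.div measurable_id)))
      measurable_const
  have hg_zero : ∀ l ≤ 1 / ξ, g l = 0 := by
    intro l hl
    rw [hg l]
    split_ifs with h
    · have hξl : ξ * l ≤ 1 := by
        have h1 : ξ * (1 / ξ) = 1 := mul_one_div_cancel hξ.ne'
        nlinarith [mul_le_mul_of_nonneg_left hl hξ.le]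
      have h2 : ξ ≤ 1 / l := (le_div_iff₀ h).mpr hξl
      exact max_eq_left (sub_nonpos.mpr h2)
    · rfl
  have hg_pos : ∀ l, 1 / ξ < l → g l = ξ - 1 / l := by
    intro l hl
    have hl0 : 0 < l := lt_trans (by positivity) hl
    rw [hg l, if_pos hl0]
    have h1 : 1 / l < ξ := by
      rw [div_lt_iff₀ hl0]
      rw [div_lt_iff₀ hξ] at hl
      linarith
    exact max_eq_right (by linarith)
  set ψ : ℝ → ℝ := fun p => (ξ - p)⁻¹ with hψ
  have hψ_deriv : ∀ p ∈ Ioo (0:ℝ) ξ, HasDerivAt ψ (((ξ - p) ^ 2)⁻¹) p := by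
    intro p hp
    have hne : ξ - p ≠ 0 := by intro h; have := hp.2; linarith [sub_eq_zero.mp h]
    have h1 : HasDerivAt (fun q : ℝ => ξ - q) (-1) p := by
      simpa using (hasDerivAt_id p).const_sub ξ
    have h2 := h1.inv hne
    rw [neg_neg, one_div] at h2
    exact h2
  have hψ_inj : Set.InjOn ψ (Ioo 0 ξ) := by
    intro p hp q hq h
    have h3 : ξ - p = ξ - q := inv_injective h
    linarith
  have hψ_img : ψ '' Ioo 0 ξ = Ioi (1 / ξ) := by
    ext x
    constructor
    · rintro ⟨p, ⟨hp0, hpξ⟩, rfl⟩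
      rw [mem_Ioi, one_div]
      exact inv_strictAnti₀ (by linarith) (by linarith)
    · intro hx
      rw [mem_Ioi] at hx
      have hx0 : 0 < x := lt_trans (by positivity) hx
      refine ⟨ξ - x⁻¹, ⟨?_, ?_⟩, ?_⟩
      · have hxi : x⁻¹ < ξ := by
          rw [one_div] at hx
          calc x⁻¹ < (ξ⁻¹)⁻¹ := inv_strictAnti₀ (by positivity) hx
          _ = ξ := inv_inv ξ
        linarith
      · have : 0 < x⁻¹ := by positivity
        linarith
      · simp [hψ, inv_inv]
  ext A hA
  rw [Measure.map_apply hg_meas hA]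
  have hpre : MeasurableSet (g ⁻¹' A) := hg_meas hA
  have hdiff : g ⁻¹' A \ Iic (1 / ξ) = g ⁻¹' A ∩ Ioi (1 / ξ) := by
    rw [diff_eq, compl_Iic]
  have hsplit : (volume.withDensity ρ) (g ⁻¹' A)
      = (volume.withDensity ρ) (g ⁻¹' A ∩ Iic (1 / ξ))
        + (volume.withDensity ρ) (g ⁻¹' A ∩ Ioi (1 / ξ)) := by
    rw [← hdiff, measure_inter_add_diff _ measurableSet_Iic]
  have h1 : (volume.withDensity ρ) (g ⁻¹' A ∩ Iic (1 / ξ))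
      = (volume.withDensity ρ) (Iic (1 / ξ)) * Measure.dirac (0 : ℝ) A := by
    rw [Measure.dirac_apply' _ hA]
    by_cases h0 : (0 : ℝ) ∈ A
    · have he : g ⁻¹' A ∩ Iic (1 / ξ) = Iic (1 / ξ) := by
        ext x
        simp only [mem_inter_iff, mem_preimage, mem_Iic]
        exact ⟨fun h => h.2, fun hx => ⟨by rw [hg_zero x hx]; exact h0, hx⟩⟩
      rw [he, indicator_of_mem h0]
      simp
    · have he : g ⁻¹' A ∩ Iic (1 / ξ) = ∅ := by
        ext x
        simp only [mem_inter_iff, mem_preimage, mem_Iic, mem_empty_iff_false, iff_false, not_and]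
        intro hgA hx
        rw [hg_zero x hx] at hgA
        exact h0 hgA
      rw [he, indicator_of_notMem h0]
      simp
  have himg2 : g ⁻¹' A ∩ Ioi (1 / ξ) = ψ '' (A ∩ Ioo 0 ξ) := by
    ext x
    simp only [mem_inter_iff, mem_preimage, mem_Ioi, mem_image, mem_Ioo]
    constructor
    · rintro ⟨hgA, hx⟩
      have hx0 : 0 < x := lt_trans (by positivity) hx
      have hxi : 1 / x < ξ := by
        rw [div_lt_iff₀ hx0]
        rw [div_lt_iff₀ hξ] at hx
        linarith
      refine ⟨ξ - 1 / x, ⟨?_, by linarith, sub_lt_self ξ (by positivity)⟩, ?_⟩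
      · rw [← hg_pos x hx]; exact hgA
      · show (ξ - (ξ - 1 / x))⁻¹ = x
        rw [sub_sub_cancel, one_div, inv_inv]
    · rintro ⟨p, ⟨hpA, hp0, hpξ⟩, rfl⟩
      have hmem : ψ p ∈ Ioi (1 / ξ) := by
        rw [← hψ_img]; exact ⟨p, ⟨hp0, hpξ⟩, rfl⟩
      rw [mem_Ioi] at hmem
      refine ⟨?_, hmem⟩
      rw [hg_pos _ hmem]
      have hp' : ξ - 1 / ψ p = p := by
        show ξ - 1 / (ξ - p)⁻¹ = p
        rw [one_div, inv_inv]
        ring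
      rw [hp']
      exact hpA
  have hsA : MeasurableSet (A ∩ Ioo (0:ℝ) ξ) := hA.inter measurableSet_Ioo
  have h2 : (volume.withDensity ρ) (g ⁻¹' A ∩ Ioi (1 / ξ))
      = ∫⁻ p in A ∩ Ioo 0 ξ, ENNReal.ofReal (f (1 / (ξ - p)) / (ξ - p) ^ 2) := by
    rw [withDensity_apply _ (hpre.inter measurableSet_Ioi), himg2,
      lintegral_image_1d hsA
        (fun x hx => (hψ_deriv x hx.2).hasDerivWithinAt)
        (hψ_inj.mono inter_subset_right) ρ]
    refine setLIntegral_congr_fun hsA (fun p hp => ?_)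
    have hp2 : 0 < ξ - p := by have := hp.2.2; linarith
    have hpos : (0:ℝ) < ((ξ - p) ^ 2)⁻¹ := by positivity
    rw [abs_of_pos hpos, ← ENNReal.ofReal_mul hpos.le]
    congr 1
    show ((ξ - p) ^ 2)⁻¹ * f ((ξ - p)⁻¹) = f (1 / (ξ - p)) / (ξ - p) ^ 2
    rw [one_div, div_eq_mul_inv, mul_comm]
  have h3 : (volume.withDensity (fun p =>
          if 0 < p ∧ p < ξ then ENNReal.ofReal (f (1 / (ξ - p)) / (ξ - p) ^ 2) else 0)) A
      = ∫⁻ p in A ∩ Ioo 0 ξ, ENNReal.ofReal (f (1 / (ξ - p)) / (ξ - p) ^ 2) := by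
    rw [withDensity_apply _ hA]
    have hind : (fun p => if 0 < p ∧ p < ξ then
        ENNReal.ofReal (f (1 / (ξ - p)) / (ξ - p) ^ 2) else 0)
        = (Ioo (0:ℝ) ξ).indicator (fun p => ENNReal.ofReal (f (1 / (ξ - p)) / (ξ - p) ^ 2)) := by
      funext p
      by_cases h : 0 < p ∧ p < ξ
      · rw [if_pos h, indicator_of_mem (by exact h)]
      · rw [if_neg h, indicator_of_notMem (by simpa [mem_Ioo] using h)]
    rw [hind, lintegral_indicator measurableSet_Ioo _, Measure.restrict_restrict measurableSet_Ioo,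
      inter_comm]
  rw [hsplit, h1, h2, Measure.add_apply, Measure.smul_apply, smul_eq_mul, h3]
end

section
/- Let t be a positive integer and P > 0. Let (Ω, 𝔽, ℙ) be a probability space and S : Ω → Matrix (Fin t) (Fin t) ℂ a measurable random matrix that is almost surely Hermitian positive semidefinite and satisfies E[‖S‖] < ∞. For q : Fin t → ℝ with q_k ≥ 0 for all k, define Ψ(q) = E[log det(I_t + S · diag(q))] (the determinant is real and ≥ 1 almost surely). Then q* with q*_k ≥ 0 and ∑_k q*_k = P maximizes Ψ over {q : q_k ≥ 0, ∑_k q_k = P} if and only if there exists a constant μ ∈ ℝ such that for every k: if q*_k > 0 then E[((I_t + S·diag(q*))^{-1} S)_{kk}] = μ, and if q*_k = 0 then E[((I_t + S·diag(q*))^{-1} S)_{kk}] ≤ μ. (The matrix (I + S·diag(q*))^{-1} S is almost surely Hermitian, so its diagonal entries are real.) -/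
open MeasureTheory Matrix
open scoped ComplexOrder

/-- Matrices inherit the product measurable structure. -/
instance matrixMeasurableSpace {m n α : Type*} [MeasurableSpace α] :
    MeasurableSpace (Matrix m n α) :=
  inferInstanceAs (MeasurableSpace (m → n → α))

section SqrtPort
open scoped MatrixOrder
noncomputable def Matrix.PosSemidef.sqrt {n : Type*} [Fintype n] [DecidableEq n]
    {A : Matrix n n ℂ} (_hA : A.PosSemidef) : Matrix n n ℂ := CFC.sqrt A
lemma Matrix.PosSemidef.posSemidef_sqrt {n : Type*} [Fintype n] [DecidableEq n]
    {A : Matrix n n ℂ} (hA : A.PosSemidef) : hA.sqrt.PosSemidef :=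
  (CFC.sqrt_nonneg A).posSemidef
lemma Matrix.PosSemidef.sqrt_mul_self {n : Type*} [Fintype n] [DecidableEq n]
    {A : Matrix n n ℂ} (hA : A.PosSemidef) : hA.sqrt * hA.sqrt = A :=
  CFC.sqrt_mul_sqrt_self A hA.nonneg
end SqrtPort

attribute [local instance] Matrix.frobeniusSeminormedAddCommGroup

set_option maxHeartbeats 1000000
attribute [local instance] Matrix.frobeniusSeminormedAddCommGroup

namespace KT
variable {t : ℕ}

noncomputable def Dg (q : Fin t → ℝ) : Matrix (Fin t) (Fin t) ℂ :=
  Matrix.diagonal fun k => (q k : ℂ)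

lemma Dg_herm (q : Fin t → ℝ) : (Dg q).IsHermitian := by
  rw [Matrix.IsHermitian, Dg, Matrix.diagonal_conjTranspose]
  have : star (fun k => ((q k : ℂ))) = fun k => ((q k : ℂ)) :=
    funext fun k => Complex.conj_ofReal _
  rw [this]

lemma Dg_psd {q : Fin t → ℝ} (hq : ∀ k, 0 ≤ q k) : (Dg q).PosSemidef := by
  rw [Dg, Matrix.posSemidef_diagonal_iff]
  intro k; exact_mod_cast Complex.zero_le_real.mpr (hq k)

lemma Dg_add (q r : Fin t → ℝ) : Dg (q + r) = Dg q + Dg r := by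
  rw [Dg, Dg, Dg, Matrix.diagonal_add]; congr 1; funext k; push_cast [Pi.add_apply]; rfl

lemma Dg_smul (c : ℝ) (q : Fin t → ℝ) : Dg (c • q) = (c : ℂ) • Dg q := by
  have : (fun k => ((c • q) k : ℂ)) = (c : ℂ) • fun k => (q k : ℂ) := by
    funext k; simp [Pi.smul_apply, smul_eq_mul]
  rw [Dg, Dg, this, Matrix.diagonal_smul]

variable {A : Matrix (Fin t) (Fin t) ℂ} (hA : A.PosSemidef)

noncomputable def N (hA : A.PosSemidef) (q : Fin t → ℝ) : Matrix (Fin t) (Fin t) ℂ :=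
  1 + hA.sqrt * Dg q * hA.sqrt

lemma N_herm (q : Fin t → ℝ) : (N hA q).IsHermitian := by
  have hB : hA.sqrt.IsHermitian := hA.posSemidef_sqrt.1
  have h2 : (hA.sqrt * Dg q * hA.sqrt).IsHermitian := by
    rw [Matrix.IsHermitian, Matrix.conjTranspose_mul, Matrix.conjTranspose_mul,
      hB.eq, (Dg_herm q).eq, Matrix.mul_assoc]
  exact Matrix.isHermitian_one.add h2

lemma N_psd_part {q : Fin t → ℝ} (hq : ∀ k, 0 ≤ q k) :
    (hA.sqrt * Dg q * hA.sqrt).PosSemidef := by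
  have hB : hA.sqrt.IsHermitian := hA.posSemidef_sqrt.1
  have h := Matrix.PosSemidef.mul_mul_conjTranspose_same (Dg_psd hq) hA.sqrt
  rwa [hB.eq] at h

lemma N_posdef {q : Fin t → ℝ} (hq : ∀ k, 0 ≤ q k) : (N hA q).PosDef := by
  have h := Matrix.PosDef.posSemidef_add (N_psd_part hA hq) Matrix.PosDef.one
  rwa [add_comm] at h

lemma N_det_eq (q : Fin t → ℝ) : (1 + A * Dg q).det = (N hA q).det := by
  conv_lhs => rw [← hA.sqrt_mul_self, Matrix.mul_assoc, Matrix.det_one_add_mul_comm]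
  rw [N, Matrix.mul_assoc]


section Herm
variable {H K : Matrix (Fin t) (Fin t) ℂ}

lemma det_conj_unitary (U : Matrix.unitaryGroup (Fin t) ℂ) (X : Matrix (Fin t) (Fin t) ℂ) :
    ((U : Matrix (Fin t) (Fin t) ℂ) * X * (star U : Matrix (Fin t) (Fin t) ℂ)).det = X.det := by
  rw [Matrix.det_mul, Matrix.det_mul, mul_comm, ← mul_assoc, ← Matrix.det_mul,
    Matrix.UnitaryGroup.star_mul_self, Matrix.det_one, one_mul]

lemma det_one_add_smul_herm (hK : K.IsHermitian) (s : ℝ) :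
    (1 + (s : ℂ) • K).det = ∏ i, ((1 + s * hK.eigenvalues i : ℝ) : ℂ) := by
  have hU : (hK.eigenvectorUnitary : Matrix (Fin t) (Fin t) ℂ) *
      (star hK.eigenvectorUnitary : Matrix (Fin t) (Fin t) ℂ) = 1 :=
    Matrix.mem_unitaryGroup_iff.mp hK.eigenvectorUnitary.2
  have key : 1 + (s : ℂ) • K =
      (hK.eigenvectorUnitary : Matrix (Fin t) (Fin t) ℂ) *
        (1 + (s : ℂ) • Matrix.diagonal (RCLike.ofReal ∘ hK.eigenvalues)) *
        (star hK.eigenvectorUnitary : Matrix (Fin t) (Fin t) ℂ) := by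
    rw [Matrix.mul_add, Matrix.add_mul, Matrix.mul_one, hU, Matrix.mul_smul,
      Matrix.smul_mul, ← (hK.spectral_theorem.trans (Unitary.conjStarAlgAut_apply _ _))]
  rw [key, det_conj_unitary]
  rw [← Matrix.diagonal_smul, ← Matrix.diagonal_one, Matrix.diagonal_add, Matrix.det_diagonal]
  refine Finset.prod_congr rfl fun i _ => ?_
  simp only [Pi.add_apply, Pi.one_apply, Pi.smul_apply, Function.comp_apply, smul_eq_mul]
  push_cast
  rfl

lemma rayleigh_nonneg (hK : K.IsHermitian) {a b : ℝ}
    (h : ((a : ℂ) • (1 : Matrix (Fin t) (Fin t) ℂ) + (b : ℂ) • K).PosSemidef) (i : Fin t) :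
    0 ≤ a + b * hK.eigenvalues i := by
  set v : Fin t → ℂ := ⇑(hK.eigenvectorBasis i) with hv
  have hvne : v ≠ 0 := by
    have h0 := hK.eigenvectorBasis.orthonormal.ne_zero i
    intro hc
    apply h0
    ext j
    exact congrFun hc j
  have hmul : ((a : ℂ) • (1 : Matrix (Fin t) (Fin t) ℂ) + (b : ℂ) • K) *ᵥ v
      = ((a + b * hK.eigenvalues i : ℝ) : ℂ) • v := by
    rw [Matrix.add_mulVec, Matrix.smul_mulVec, Matrix.smul_mulVec,
      Matrix.one_mulVec, hK.mulVec_eigenvectorBasis i]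
    funext j
    push_cast
    simp [Pi.add_apply, Pi.smul_apply, smul_eq_mul, Complex.real_smul]
    have hvj : hK.eigenvectorBasis i j = v j := rfl
    rw [hvj]; ring
  have hq := h.dotProduct_mulVec_nonneg v
  rw [hmul, dotProduct_smul] at hq
  have hc : 0 < dotProduct (star v) v := dotProduct_star_self_pos_iff.mpr hvne
  rw [Complex.pos_iff] at hc
  rw [smul_eq_mul, Complex.nonneg_iff] at hq
  have := hq.1
  rw [Complex.mul_re, Complex.ofReal_re, Complex.ofReal_im, zero_mul, sub_zero] at this
  nlinarith [hc.1, this]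

lemma rayleigh_pos (hK : K.IsHermitian) {a b : ℝ}
    (h : ((a : ℂ) • (1 : Matrix (Fin t) (Fin t) ℂ) + (b : ℂ) • K).PosDef) (i : Fin t) :
    0 < a + b * hK.eigenvalues i := by
  set v : Fin t → ℂ := ⇑(hK.eigenvectorBasis i) with hv
  have hvne : v ≠ 0 := by
    have h0 := hK.eigenvectorBasis.orthonormal.ne_zero i
    intro hc
    apply h0
    ext j
    exact congrFun hc j
  have hmul : ((a : ℂ) • (1 : Matrix (Fin t) (Fin t) ℂ) + (b : ℂ) • K) *ᵥ v
      = ((a + b * hK.eigenvalues i : ℝ) : ℂ) • v := by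
    rw [Matrix.add_mulVec, Matrix.smul_mulVec, Matrix.smul_mulVec,
      Matrix.one_mulVec, hK.mulVec_eigenvectorBasis i]
    funext j
    push_cast
    simp [Pi.add_apply, Pi.smul_apply, smul_eq_mul, Complex.real_smul]
    have hvj : hK.eigenvectorBasis i j = v j := rfl
    rw [hvj]; ring
  have hq := h.dotProduct_mulVec_pos hvne
  rw [hmul, dotProduct_smul] at hq
  have hc : 0 < dotProduct (star v) v := dotProduct_star_self_pos_iff.mpr hvne
  rw [Complex.pos_iff] at hc
  rw [smul_eq_mul, Complex.pos_iff] at hq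
  have := hq.1
  rw [Complex.mul_re, Complex.ofReal_re, Complex.ofReal_im, zero_mul, sub_zero] at this
  nlinarith [hc.1, this]

end Herm

section Aux
variable {X : Matrix (Fin t) (Fin t) ℂ}

lemma psd_diag_nonneg (hX : X.PosSemidef) (k : Fin t) : 0 ≤ (X k k).re ∧ (X k k).im = 0 := by
  have h := hX.dotProduct_mulVec_nonneg (Pi.single k 1)
  have he : dotProduct (star (Pi.single k (1:ℂ))) (X *ᵥ Pi.single k 1) = X k k := by
    rw [Matrix.mulVec_single]
    simp [dotProduct, Pi.single_apply, apply_ite (star : ℂ → ℂ)]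
  rw [he, Complex.nonneg_iff] at h
  exact ⟨h.1, h.2.symm⟩

lemma entry_re_le_norm (X : Matrix (Fin t) (Fin t) ℂ) (k : Fin t) : (X k k).re ≤ ‖X‖ := by
  classical
  have h1 : (X k k).re ≤ ‖X k k‖ := Complex.re_le_norm _
  refine h1.trans ?_
  rw [Matrix.frobenius_norm_def]
  have h2 : (‖X k k‖ ^ (2:ℝ)) ^ ((1:ℝ)/2) = ‖X k k‖ := by
    rw [← Real.rpow_mul (norm_nonneg _)]
    norm_num
  rw [← h2]
  have h0 : ‖X k k‖^(2:ℝ) ≤ ∑ j, ‖X k j‖^(2:ℝ) :=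
    Finset.single_le_sum (f := fun j => ‖X k j‖^(2:ℝ))
      (fun j _ => Real.rpow_nonneg (norm_nonneg _) _) (Finset.mem_univ k)
  have h3 : ∑ j, ‖X k j‖^(2:ℝ) ≤ ∑ i, ∑ j, ‖X i j‖^(2:ℝ) :=
    Finset.single_le_sum (f := fun i => ∑ j, ‖X i j‖^(2:ℝ))
      (fun i _ => Finset.sum_nonneg fun j _ => Real.rpow_nonneg (norm_nonneg _) _)
      (Finset.mem_univ k)
  exact Real.rpow_le_rpow (Real.rpow_nonneg (norm_nonneg _) _) (le_trans h0 h3) (by norm_num)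

end Aux

section Pencil
variable {A : Matrix (Fin t) (Fin t) ℂ} (hA : A.PosSemidef)

lemma Dg_sub (q r : Fin t → ℝ) : Dg (q - r) = Dg q - Dg r := by
  rw [Dg, Dg, Dg, Matrix.diagonal_sub]; congr 1; funext k; push_cast [Pi.sub_apply]; rfl

lemma N_affine (q0 q1 : Fin t → ℝ) (s : ℝ) :
    N hA (q0 + s • (q1 - q0)) = N hA q0 + (s : ℂ) • (N hA q1 - N hA q0) := by
  rw [N, N, N, Dg_add, Dg_smul, Dg_sub]
  simp only [Matrix.mul_add, Matrix.add_mul, Matrix.mul_sub, Matrix.sub_mul,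
    Matrix.mul_smul, Matrix.smul_mul, smul_sub, smul_add]
  abel

/-- eigenvalues of `N hA q` are at least 1 when `q ≥ 0`. -/
lemma N_eigenvalues_ge_one {q : Fin t → ℝ} (hq : ∀ k, 0 ≤ q k) (i : Fin t) :
    1 ≤ (N_herm hA q).eigenvalues i := by
  have key : ((-1 : ℝ) : ℂ) • (1 : Matrix (Fin t) (Fin t) ℂ) + ((1:ℝ) : ℂ) • N hA q
      = hA.sqrt * Dg q * hA.sqrt := by
    rw [N]; push_cast; simp only [one_smul, neg_smul]; abel
  have h := rayleigh_nonneg (N_herm hA q) (a := -1) (b := 1) (key ▸ N_psd_part hA hq) i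
  linarith

/-- `N q` determinant is a positive real. -/
lemma N_det_real {q : Fin t → ℝ} (hq : ∀ k, 0 ≤ q k) :
    (N hA q).det = (((N hA q).det.re : ℝ) : ℂ) ∧ 0 < (N hA q).det.re := by
  have h := (N_posdef hA hq).det_pos
  rw [Complex.pos_iff] at h
  refine ⟨?_, h.1⟩
  apply Complex.ext <;> simp [h.2.symm]

lemma abstract_key (B Nq D : Matrix (Fin t) (Fin t) ℂ)
    (hsub : B * (D * B) = Nq - 1) (hNdet : IsUnit Nq.det) :
    (1 + (B * B) * D) * (B * (Nq⁻¹ * B)) = B * B := by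
  calc (1 + (B * B) * D) * (B * (Nq⁻¹ * B))
      = B * (Nq⁻¹ * B) + B * (B * (D * (B * (Nq⁻¹ * B)))) := by
        rw [Matrix.add_mul, Matrix.one_mul]; simp only [Matrix.mul_assoc]
    _ = B * (Nq⁻¹ * B + (B * (D * B)) * (Nq⁻¹ * B)) := by
        rw [← Matrix.mul_add]; congr 2; simp only [Matrix.mul_assoc]
    _ = B * (Nq⁻¹ * B + ((Nq - 1) * Nq⁻¹) * B) := by
        rw [hsub, ← Matrix.mul_assoc]
    _ = B * (Nq⁻¹ * B + (1 - Nq⁻¹) * B) := by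
        rw [Matrix.sub_mul Nq, Matrix.mul_nonsing_inv _ hNdet, Matrix.one_mul]
    _ = B * B := by
        rw [Matrix.sub_mul, Matrix.one_mul]
        congr 1
        abel

/-- key inverse identity : `(1 + A diag q)⁻¹ * A = B (N q)⁻¹ B`. -/
lemma inv_mul_eq (q : Fin t → ℝ) (hq : ∀ k, 0 ≤ q k) :
    (1 + A * Dg q)⁻¹ * A = hA.sqrt * (N hA q)⁻¹ * hA.sqrt := by
  have hNdet : IsUnit (N hA q).det := (N_posdef hA hq).det_pos.ne'.isUnit
  have hdet : IsUnit (1 + A * Dg q).det := by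
    rw [N_det_eq hA q]; exact hNdet
  have hsub : hA.sqrt * (Dg q * hA.sqrt) = N hA q - 1 := by
    rw [N, ← Matrix.mul_assoc, add_sub_cancel_left]
  have key := abstract_key hA.sqrt (N hA q) (Dg q) hsub hNdet
  rw [hA.sqrt_mul_self] at key
  calc (1 + A * Dg q)⁻¹ * A
      = (1 + A * Dg q)⁻¹ * ((1 + A * Dg q) * (hA.sqrt * ((N hA q)⁻¹ * hA.sqrt))) := by
        rw [key]
    _ = hA.sqrt * ((N hA q)⁻¹ * hA.sqrt) := by
        rw [← Matrix.mul_assoc, Matrix.nonsing_inv_mul _ hdet, Matrix.one_mul]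
    _ = hA.sqrt * (N hA q)⁻¹ * hA.sqrt := by rw [Matrix.mul_assoc]

/-- `B (N q)⁻¹ B` is PSD. -/
lemma BNB_psd (q : Fin t → ℝ) (hq : ∀ k, 0 ≤ q k) :
    (hA.sqrt * (N hA q)⁻¹ * hA.sqrt).PosSemidef := by
  have h := ((N_posdef hA hq).inv).posSemidef.mul_mul_conjTranspose_same hA.sqrt
  rwa [hA.posSemidef_sqrt.1.eq] at h

/-- `A − B (N q)⁻¹ B` is PSD. -/
lemma BNB_le (q : Fin t → ℝ) (hq : ∀ k, 0 ≤ q k) :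
    (A - hA.sqrt * (N hA q)⁻¹ * hA.sqrt).PosSemidef := by
  set Nq := N hA q with hNq
  have hN := N_herm hA q
  have hNpd := N_posdef hA hq
  set U := hN.eigenvectorUnitary with hU
  have hUU : (U : Matrix (Fin t) (Fin t) ℂ) * (star U : Matrix (Fin t) (Fin t) ℂ) = 1 :=
    Matrix.mem_unitaryGroup_iff.mp U.2
  have hUU' : (star U : Matrix (Fin t) (Fin t) ℂ) * (U : Matrix (Fin t) (Fin t) ℂ) = 1 :=
    Matrix.mem_unitaryGroup_iff'.mp U.2
  set ev := hN.eigenvalues with hev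
  -- inverse of N via spectral theorem
  have hNspec : Nq = (U : Matrix (Fin t) (Fin t) ℂ) * Matrix.diagonal (RCLike.ofReal ∘ ev) *
      (star U : Matrix (Fin t) (Fin t) ℂ) :=
      hN.spectral_theorem.trans (Unitary.conjStarAlgAut_apply _ _)
  have hev1 : ∀ i, 1 ≤ ev i := N_eigenvalues_ge_one hA hq
  have hNinv : Nq⁻¹ = (U : Matrix (Fin t) (Fin t) ℂ) *
      Matrix.diagonal (fun i => (((ev i)⁻¹ : ℝ) : ℂ)) * (star U : Matrix (Fin t) (Fin t) ℂ) := by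
    apply Matrix.inv_eq_right_inv
    rw [hNspec]
    calc (U : Matrix (Fin t) (Fin t) ℂ) * Matrix.diagonal (RCLike.ofReal ∘ ev) *
          (star U : Matrix (Fin t) (Fin t) ℂ) *
          ((U : Matrix (Fin t) (Fin t) ℂ) * Matrix.diagonal (fun i => (((ev i)⁻¹ : ℝ) : ℂ)) *
          (star U : Matrix (Fin t) (Fin t) ℂ))
        = (U : Matrix (Fin t) (Fin t) ℂ) * (Matrix.diagonal (RCLike.ofReal ∘ ev) *
            Matrix.diagonal (fun i => (((ev i)⁻¹ : ℝ) : ℂ))) * (star U : Matrix (Fin t) (Fin t) ℂ) := by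
          simp only [Matrix.mul_assoc]
          rw [← Matrix.mul_assoc (star U : Matrix (Fin t) (Fin t) ℂ), hUU', Matrix.one_mul]
      _ = 1 := by
          rw [Matrix.diagonal_mul_diagonal]
          have : (fun i => (RCLike.ofReal ∘ ev) i * (((ev i)⁻¹ : ℝ) : ℂ)) = fun _ => (1:ℂ) := by
            funext i
            have : ev i ≠ 0 := by have := hev1 i; intro h; rw [h] at this; linarith
            simp only [Function.comp_apply]
            show ((ev i : ℝ) : ℂ) * (((ev i)⁻¹ : ℝ) : ℂ) = 1
            rw [← Complex.ofReal_mul, mul_inv_cancel₀ this, Complex.ofReal_one]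
          rw [this, Matrix.diagonal_one, Matrix.mul_one, hUU]
  have hsub : Nq⁻¹ = (U : Matrix (Fin t) (Fin t) ℂ) *
      Matrix.diagonal (fun i => (((ev i)⁻¹ : ℝ) : ℂ)) * (star U : Matrix (Fin t) (Fin t) ℂ) := hNinv
  -- 1 - N⁻¹ PSD
  have hd : (1 - Nq⁻¹).PosSemidef := by
    have h1 : (1 : Matrix (Fin t) (Fin t) ℂ) = (U : Matrix (Fin t) (Fin t) ℂ) *
        Matrix.diagonal (fun _ => (1:ℂ)) * (star U : Matrix (Fin t) (Fin t) ℂ) := by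
      rw [Matrix.diagonal_one, Matrix.mul_one, hUU]
    have heq : 1 - Nq⁻¹ = (U : Matrix (Fin t) (Fin t) ℂ) *
        Matrix.diagonal (fun i => ((1 - (ev i)⁻¹ : ℝ) : ℂ)) *
        (star U : Matrix (Fin t) (Fin t) ℂ) := by
      rw [hsub]
      conv_lhs => rw [h1]
      rw [← Matrix.sub_mul, ← Matrix.mul_sub, Matrix.diagonal_sub]
      congr 3
      funext i; push_cast; ring
    rw [heq]
    have hpsd : (Matrix.diagonal (fun i => ((1 - (ev i)⁻¹ : ℝ) : ℂ))).PosSemidef := by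
      rw [Matrix.posSemidef_diagonal_iff]
      intro i
      have h1 := hev1 i
      have : 0 ≤ 1 - (ev i)⁻¹ := by
        have : (ev i)⁻¹ ≤ 1 := by
          rw [inv_le_one_iff₀]; right; linarith
        linarith
      exact_mod_cast Complex.zero_le_real.mpr this
    have := hpsd.mul_mul_conjTranspose_same (U : Matrix (Fin t) (Fin t) ℂ)
    convert this using 2
    exact Matrix.star_eq_conjTranspose _
  have h2 := hd.mul_mul_conjTranspose_same hA.sqrt
  rw [hA.posSemidef_sqrt.1.eq] at h2
  have heq2 : hA.sqrt * (1 - Nq⁻¹) * hA.sqrt = A - hA.sqrt * Nq⁻¹ * hA.sqrt := by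
    rw [Matrix.mul_sub, Matrix.sub_mul, Matrix.mul_one, hA.sqrt_mul_self]
  rwa [heq2] at h2

/-- The pencil eigenvalue package. -/
lemma pencil_exists (q0 q1 : Fin t → ℝ) (hq0 : ∀ k, 0 ≤ q0 k) (hq1 : ∀ k, 0 ≤ q1 k) :
    ∃ κ : Fin t → ℝ,
      (∀ s : ℝ, 0 ≤ s → s ≤ 1 → ∀ i, 0 < 1 + s * κ i) ∧
      (∀ s : ℝ, (N hA (q0 + s • (q1 - q0))).det
        = (N hA q0).det * ∏ i, ((1 + s * κ i : ℝ) : ℂ)) ∧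
      (∑ i, κ i = ∑ k, (q1 k - q0 k) * (((1 + A * Dg q0)⁻¹ * A) k k).re) := by
  classical
  have PD0 := N_posdef hA hq0
  set C := PD0.posSemidef.sqrt with hCdef
  have hC : C.PosSemidef := PD0.posSemidef.posSemidef_sqrt
  have hCH : C.IsHermitian := hC.1
  have hCC : C * C = N hA q0 := PD0.posSemidef.sqrt_mul_self
  have hCdet : IsUnit C.det := by
    have h : C.det * C.det = (N hA q0).det := by rw [← Matrix.det_mul, hCC]
    have hne : (N hA q0).det ≠ 0 := PD0.det_pos.ne'
    have : C.det ≠ 0 := fun hc => hne (by rw [← h, hc, mul_zero])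
    exact this.isUnit
  have hCinv : C * C⁻¹ = 1 := Matrix.mul_nonsing_inv _ hCdet
  have hCinv' : C⁻¹ * C = 1 := Matrix.nonsing_inv_mul _ hCdet
  set X := N hA q1 - N hA q0 with hXdef
  have hXH : X.IsHermitian := (N_herm hA q1).sub (N_herm hA q0)
  set K := C⁻¹ * X * C⁻¹ with hKdef
  have hCHinv : (C⁻¹).IsHermitian := hCH.inv
  have hKH : K.IsHermitian := by
    rw [Matrix.IsHermitian, hKdef, Matrix.conjTranspose_mul, Matrix.conjTranspose_mul,
      hCHinv.eq, hXH.eq, Matrix.mul_assoc]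
  have hCKC : ∀ s : ℝ, C * (1 + (s:ℂ) • K) * C = N hA q0 + (s:ℂ) • X := by
    intro s
    have h1 : C * ((s:ℂ) • K) * C = (s:ℂ) • X := by
      rw [hKdef, Matrix.mul_smul, Matrix.smul_mul]
      congr 1
      calc C * (C⁻¹ * X * C⁻¹) * C
          = (C * C⁻¹) * X * (C⁻¹ * C) := by simp only [Matrix.mul_assoc]
        _ = X := by rw [hCinv, hCinv', Matrix.one_mul, Matrix.mul_one]
    rw [Matrix.mul_add, Matrix.add_mul, Matrix.mul_one, hCC, h1]
  have hconj : ∀ s : ℝ, N hA (q0 + s • (q1 - q0)) = C * (1 + (s:ℂ) • K) * C := by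
    intro s; rw [N_affine hA q0 q1 s, hCKC s]
  have hCdet2 : C.det * C.det = (N hA q0).det := by rw [← Matrix.det_mul, hCC]
  refine ⟨hKH.eigenvalues, ?_, ?_, ?_⟩
  · -- positivity of 1 + s κ i
    intro s hs0 hs1 i
    have hqs : ∀ k, 0 ≤ (q0 + s • (q1 - q0)) k := by
      intro k
      have h0 := hq0 k; have h1 := hq1 k
      simp only [Pi.add_apply, Pi.smul_apply, Pi.sub_apply, smul_eq_mul]
      nlinarith
    have hexp : 1 + (s:ℂ) • K = C⁻¹ * (N hA (q0 + s • (q1 - q0))) * C⁻¹ := by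
      rw [hconj s]
      symm
      calc C⁻¹ * (C * (1 + (s:ℂ) • K) * C) * C⁻¹
          = (C⁻¹ * C) * (1 + (s:ℂ) • K) * (C * C⁻¹) := by simp only [Matrix.mul_assoc]
        _ = 1 + (s:ℂ) • K := by rw [hCinv, hCinv', Matrix.one_mul, Matrix.mul_one]
    have hPD : ((1:ℂ) • (1 : Matrix (Fin t) (Fin t) ℂ) + (s:ℂ) • K).PosDef := by
      rw [one_smul]
      refine Matrix.PosDef.of_dotProduct_mulVec_pos ?_ ?_
      · have : ((s:ℂ) • K).IsHermitian := by
          rw [Matrix.IsHermitian, Matrix.conjTranspose_smul, hKH.eq]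
          congr 1
          simp [Complex.conj_ofReal]
        exact Matrix.isHermitian_one.add this
      · intro x hx
        have hy : C⁻¹ *ᵥ x ≠ 0 := by
          intro hc
          apply hx
          have : C *ᵥ (C⁻¹ *ᵥ x) = x := by
            rw [Matrix.mulVec_mulVec, hCinv, Matrix.one_mulVec]
          rw [hc, Matrix.mulVec_zero] at this
          exact this.symm
        have hform : dotProduct (star x) ((1 + (s:ℂ) • K) *ᵥ x)
            = dotProduct (star (C⁻¹ *ᵥ x))
              ((N hA (q0 + s • (q1 - q0))) *ᵥ (C⁻¹ *ᵥ x)) := by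
          rw [hexp]
          rw [← Matrix.mulVec_mulVec, ← Matrix.mulVec_mulVec]
          rw [dotProduct_mulVec (star x) C⁻¹]
          congr 1
          rw [Matrix.star_mulVec, hCHinv.eq]
        rw [hform]
        exact (N_posdef hA hqs).dotProduct_mulVec_pos hy
    have := rayleigh_pos hKH (a := 1) (b := s) (by exact_mod_cast hPD) i
    linarith
  · -- determinant identity
    intro s
    rw [hconj s]
    have hd : (C * (1 + (s:ℂ) • K) * C).det
        = (N hA q0).det * (1 + (s:ℂ) • K).det := by
      rw [Matrix.det_mul, Matrix.det_mul, ← hCdet2]; ring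
    rw [hd, det_one_add_smul_herm hKH s]
  · -- trace identity
    have hUK : (star (hKH.eigenvectorUnitary : Matrix (Fin t) (Fin t) ℂ)) *
        (hKH.eigenvectorUnitary : Matrix (Fin t) (Fin t) ℂ) = 1 :=
      Matrix.mem_unitaryGroup_iff'.mp hKH.eigenvectorUnitary.2
    have htrK : K.trace = ∑ i, ((hKH.eigenvalues i : ℝ) : ℂ) := by
      conv_lhs => rw [hKH.spectral_theorem]
      rw [Unitary.conjStarAlgAut_apply, Matrix.trace_mul_cycle, hUK, Matrix.one_mul,
        Matrix.trace_diagonal]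
      rfl
    have hXB : X = hA.sqrt * Dg (q1 - q0) * hA.sqrt := by
      rw [hXdef, N, N, Dg_sub]
      rw [Matrix.mul_sub, Matrix.sub_mul]
      abel
    have htr2 : K.trace = (((1 + A * Dg q0)⁻¹ * A) * Dg (q1 - q0)).trace := by
      rw [hKdef, Matrix.trace_mul_cycle]
      rw [show C⁻¹ * C⁻¹ * X = (C * C)⁻¹ * X by rw [Matrix.mul_inv_rev]]
      rw [hCC, hXB]
      calc ((N hA q0)⁻¹ * (hA.sqrt * Dg (q1 - q0) * hA.sqrt)).trace
          = ((N hA q0)⁻¹ * hA.sqrt * Dg (q1 - q0) * hA.sqrt).trace := by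
            simp only [Matrix.mul_assoc]
        _ = (hA.sqrt * ((N hA q0)⁻¹ * hA.sqrt * Dg (q1 - q0))).trace :=
            (Matrix.trace_mul_comm _ _)
        _ = ((hA.sqrt * (N hA q0)⁻¹ * hA.sqrt) * Dg (q1 - q0)).trace := by
            simp only [Matrix.mul_assoc]
        _ = (((1 + A * Dg q0)⁻¹ * A) * Dg (q1 - q0)).trace := by
            rw [inv_mul_eq hA q0 hq0]
    have hsum : (((1 + A * Dg q0)⁻¹ * A) * Dg (q1 - q0)).trace
        = ∑ k, ((1 + A * Dg q0)⁻¹ * A) k k * (((q1 k - q0 k) : ℝ) : ℂ) := by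
      rw [Matrix.trace]
      refine Finset.sum_congr rfl fun k _ => ?_
      simp only [Matrix.diag_apply, Dg, Matrix.mul_diagonal, Pi.sub_apply]
    have hfinal := htrK.symm.trans (htr2.trans hsum)
    have := congrArg Complex.re hfinal
    rw [Complex.re_sum, Complex.re_sum] at this
    calc ∑ i, hKH.eigenvalues i
        = ∑ i, ((hKH.eigenvalues i : ℝ) : ℂ).re := by
          refine Finset.sum_congr rfl fun i _ => (Complex.ofReal_re _).symm
      _ = ∑ k, (((1 + A * Dg q0)⁻¹ * A) k k * (((q1 k - q0 k) : ℝ) : ℂ)).re := this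
      _ = ∑ k, (q1 k - q0 k) * (((1 + A * Dg q0)⁻¹ * A) k k).re := by
          refine Finset.sum_congr rfl fun k _ => ?_
          rw [Complex.mul_re, Complex.ofReal_re, Complex.ofReal_im, mul_zero, sub_zero]
          ring

section Scalar

lemma slog_le {x : ℝ} (hx : 0 < 1 + x) : Real.log (1 + x) ≤ x := by
  have := Real.log_le_sub_one_of_pos hx; linarith

lemma slog_ge {x : ℝ} (hx : 0 < 1 + x) : 1 - (1 + x)⁻¹ ≤ Real.log (1 + x) := by
  have h2 : 0 < (1 + x)⁻¹ := by positivity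
  have := Real.log_le_sub_one_of_pos h2
  rw [Real.log_inv] at this; linarith

lemma slog_concave {x s : ℝ} (hx : 0 < 1 + x) (hs0 : 0 ≤ s) (hs1 : s ≤ 1) :
    s * Real.log (1 + x) ≤ Real.log (1 + s * x) := by
  have hcon := (StrictConcaveOn.concaveOn strictConcaveOn_log_Ioi).2 (Set.mem_Ioi.mpr hx)
    (Set.mem_Ioi.mpr one_pos) hs0 (by linarith : (0:ℝ) ≤ 1 - s) (by ring)
  simp only [smul_eq_mul, Real.log_one, mul_zero, add_zero] at hcon
  calc s * Real.log (1 + x)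
      ≤ Real.log (s * (1 + x) + (1 - s) * 1) := by simpa only [smul_eq_mul] using hcon
    _ = Real.log (1 + s * x) := by ring_nf

lemma tendsto_quot (κ : ℝ) (hpos : ∀ s : ℝ, 0 ≤ s → s ≤ 1 → 0 < 1 + s * κ) :
    Filter.Tendsto (fun n : ℕ => Real.log (1 + ((n:ℝ)+1)⁻¹ * κ) * ((n:ℝ)+1))
      Filter.atTop (nhds κ) := by
  have hsn : ∀ n : ℕ, (0:ℝ) < ((n:ℝ)+1)⁻¹ := fun n => by positivity
  have hsn1 : ∀ n : ℕ, ((n:ℝ)+1)⁻¹ ≤ 1 := fun n => by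
    rw [inv_le_one_iff₀]; right; exact le_add_of_nonneg_left (Nat.cast_nonneg n)
  have hp : ∀ n : ℕ, 0 < 1 + ((n:ℝ)+1)⁻¹ * κ := fun n => hpos _ (hsn n).le (hsn1 n)
  have hlim0 : Filter.Tendsto (fun n : ℕ => ((n:ℝ)+1)⁻¹) Filter.atTop (nhds 0) := by
    simpa using tendsto_one_div_add_atTop_nhds_zero_nat (𝕜 := ℝ)
  have hden : Filter.Tendsto (fun n : ℕ => 1 + ((n:ℝ)+1)⁻¹ * κ) Filter.atTop (nhds 1) := by
    have := (hlim0.mul_const κ).const_add 1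
    simpa using this
  have hL : Filter.Tendsto (fun n : ℕ => κ / (1 + ((n:ℝ)+1)⁻¹ * κ)) Filter.atTop (nhds κ) := by
    have := Filter.Tendsto.div (tendsto_const_nhds (x := κ)) hden one_ne_zero
    simpa [Pi.div_def] using this
  refine tendsto_of_tendsto_of_tendsto_of_le_of_le hL tendsto_const_nhds ?_ ?_
  · intro n
    have h1 := slog_ge (hp n)
    have hne : 1 + ((n:ℝ)+1)⁻¹ * κ ≠ 0 := (hp n).ne'
    have hm : ((n:ℝ)+1) ≠ 0 := by positivity
    have heq : (1 - (1 + ((n:ℝ)+1)⁻¹ * κ)⁻¹) * ((n:ℝ)+1)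
        = κ / (1 + ((n:ℝ)+1)⁻¹ * κ) := by
      rw [eq_div_iff hne]
      calc (1 - (1 + ((n:ℝ)+1)⁻¹ * κ)⁻¹) * ((n:ℝ)+1) * (1 + ((n:ℝ)+1)⁻¹ * κ)
          = ((1 + ((n:ℝ)+1)⁻¹ * κ) - (1 + ((n:ℝ)+1)⁻¹ * κ) * (1 + ((n:ℝ)+1)⁻¹ * κ)⁻¹)
            * ((n:ℝ)+1) := by ring
        _ = ((1 + ((n:ℝ)+1)⁻¹ * κ) - 1) * ((n:ℝ)+1) := by rw [mul_inv_cancel₀ hne]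
        _ = (((n:ℝ)+1)⁻¹ * κ) * ((n:ℝ)+1) := by rw [add_sub_cancel_left]
        _ = κ := by
            rw [mul_comm (((n:ℝ)+1)⁻¹) κ, mul_assoc, inv_mul_cancel₀ hm, mul_one]
    calc κ / (1 + ((n:ℝ)+1)⁻¹ * κ) = (1 - (1 + ((n:ℝ)+1)⁻¹ * κ)⁻¹) * ((n:ℝ)+1) := heq.symm
      _ ≤ Real.log (1 + ((n:ℝ)+1)⁻¹ * κ) * ((n:ℝ)+1) := by
          apply mul_le_mul_of_nonneg_right h1
          positivity
  · intro n
    have h1 := slog_le (hp n)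
    calc Real.log (1 + ((n:ℝ)+1)⁻¹ * κ) * ((n:ℝ)+1) ≤ (((n:ℝ)+1)⁻¹ * κ) * ((n:ℝ)+1) := by
          apply mul_le_mul_of_nonneg_right h1
          positivity
      _ = κ := by field_simp

end Scalar

section Gfun
variable {A : Matrix (Fin t) (Fin t) ℂ}

/-- the per-sample objective -/
noncomputable def gfun (A : Matrix (Fin t) (Fin t) ℂ) (q : Fin t → ℝ) : ℝ :=
  Real.log ((1 + A * Dg q).det.re)

lemma det_re_eq (hA : A.PosSemidef) (q : Fin t → ℝ) : (1 + A * Dg q).det.re = (N hA q).det.re := by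
  rw [N_det_eq hA q]

lemma det_re_pos (hA : A.PosSemidef) {q : Fin t → ℝ} (hq : ∀ k, 0 ≤ q k) : 0 < (1 + A * Dg q).det.re := by
  rw [det_re_eq hA q]; exact (N_det_real hA hq).2

lemma det_re_ge_one (hA : A.PosSemidef) {q : Fin t → ℝ} (hq : ∀ k, 0 ≤ q k) : 1 ≤ (1 + A * Dg q).det.re := by
  rw [det_re_eq hA q]
  have hev := N_eigenvalues_ge_one hA hq
  have hdet := (N_herm hA q).det_eq_prod_eigenvalues
  have hre : (N hA q).det.re = ∏ i, (N_herm hA q).eigenvalues i := by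
    rw [hdet]
    show (∏ i : Fin t, (((N_herm hA q).eigenvalues i : ℝ) : ℂ)).re = _
    rw [← Complex.ofReal_prod, Complex.ofReal_re]
  rw [hre]
  have h1 := Finset.prod_le_prod (s := Finset.univ) (f := fun _ : Fin t => (1:ℝ))
    (g := fun i => (N_herm hA q).eigenvalues i) (fun i _ => zero_le_one)
    (fun i _ => hev i)
  simpa using h1

lemma gfun_nonneg (hA : A.PosSemidef) {q : Fin t → ℝ} (hq : ∀ k, 0 ≤ q k) : 0 ≤ gfun A q :=
  Real.log_nonneg (det_re_ge_one hA hq)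

/-- decomposition of `gfun` along a pencil segment. -/
lemma gfun_pencil (hA : A.PosSemidef) (q0 q1 : Fin t → ℝ) (hq0 : ∀ k, 0 ≤ q0 k) (hq1 : ∀ k, 0 ≤ q1 k) :
    ∃ κ : Fin t → ℝ,
      (∀ s : ℝ, 0 ≤ s → s ≤ 1 → ∀ i, 0 < 1 + s * κ i) ∧
      (∀ s : ℝ, 0 ≤ s → s ≤ 1 →
        gfun A (q0 + s • (q1 - q0)) = gfun A q0 + ∑ i, Real.log (1 + s * κ i)) ∧
      (∑ i, κ i = ∑ k, (q1 k - q0 k) * (((1 + A * Dg q0)⁻¹ * A) k k).re) := by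
  obtain ⟨κ, hpos, hdet, htr⟩ := pencil_exists hA q0 q1 hq0 hq1
  refine ⟨κ, hpos, ?_, htr⟩
  intro s hs0 hs1
  have h0 := N_det_real hA hq0
  have hmul : (N hA q0).det * ∏ i, ((1 + s * κ i : ℝ) : ℂ)
      = (((N hA q0).det.re * ∏ i, (1 + s * κ i) : ℝ) : ℂ) := by
    rw [Complex.ofReal_mul, Complex.ofReal_prod, ← h0.1]
  have hre : (N hA (q0 + s • (q1 - q0))).det.re
      = (N hA q0).det.re * ∏ i, (1 + s * κ i) := by
    rw [hdet s, hmul, Complex.ofReal_re]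
  have hprodpos : ∀ i ∈ Finset.univ, (0:ℝ) < 1 + s * κ i := fun i _ => hpos s hs0 hs1 i
  rw [gfun, gfun, det_re_eq hA, det_re_eq hA, hre]
  rw [Real.log_mul (N_det_real hA hq0).2.ne' (Finset.prod_pos hprodpos).ne']
  congr 1
  rw [Real.log_prod]
  intro i _
  exact (hpos s hs0 hs1 i).ne'

/-- β bounds -/
lemma beta_nonneg (hA : A.PosSemidef) (q : Fin t → ℝ) (hq : ∀ k, 0 ≤ q k) (k : Fin t) :
    0 ≤ (((1 + A * Dg q)⁻¹ * A) k k).re := by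
  rw [inv_mul_eq hA q hq]
  exact (psd_diag_nonneg (BNB_psd hA q hq) k).1

lemma beta_le_norm (hA : A.PosSemidef) (q : Fin t → ℝ) (hq : ∀ k, 0 ≤ q k) (k : Fin t) :
    (((1 + A * Dg q)⁻¹ * A) k k).re ≤ ‖A‖ := by
  rw [inv_mul_eq hA q hq]
  have hle := (psd_diag_nonneg (BNB_le hA q hq) k).1
  have : (A k k).re - ((hA.sqrt * (N hA q)⁻¹ * hA.sqrt) k k).re
      = ((A - hA.sqrt * (N hA q)⁻¹ * hA.sqrt) k k).re := by
    simp [Matrix.sub_apply]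
  have h2 := entry_re_le_norm A k
  have h3 : 0 ≤ (A k k).re - ((hA.sqrt * (N hA q)⁻¹ * hA.sqrt) k k).re := by
    rw [this]; exact hle
  linarith

/-- supergradient inequality -/
lemma gfun_supergrad (hA : A.PosSemidef) (q0 q1 : Fin t → ℝ) (hq0 : ∀ k, 0 ≤ q0 k) (hq1 : ∀ k, 0 ≤ q1 k) :
    gfun A q1 ≤ gfun A q0 + ∑ k, (q1 k - q0 k) * (((1 + A * Dg q0)⁻¹ * A) k k).re := by
  obtain ⟨κ, hpos, hdec, htr⟩ := gfun_pencil hA q0 q1 hq0 hq1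
  have h1 : q0 + (1:ℝ) • (q1 - q0) = q1 := by
    funext k; simp
  have hg1 := hdec 1 zero_le_one le_rfl
  rw [h1] at hg1
  have hle : ∑ i, Real.log (1 + 1 * κ i) ≤ ∑ i, κ i := by
    refine Finset.sum_le_sum fun i _ => ?_
    have := slog_le (by simpa using hpos 1 zero_le_one le_rfl i)
    simpa using this
  rw [hg1, ← htr]
  linarith

/-- linear upper bound on `gfun` -/
lemma gfun_le (hA : A.PosSemidef) (q : Fin t → ℝ) (hq : ∀ k, 0 ≤ q k) :
    gfun A q ≤ (∑ k, q k) * ‖A‖ := by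
  have h0 : ∀ k, 0 ≤ (0 : Fin t → ℝ) k := fun k => le_rfl
  have hsup := gfun_supergrad hA 0 q h0 hq
  have hg0 : gfun A (0 : Fin t → ℝ) = 0 := by
    have : Dg (0 : Fin t → ℝ) = 0 := by
      rw [Dg]
      simp [Matrix.diagonal_zero]
    rw [gfun, this]
    simp
  have hβ : ∀ k, (((1 + A * Dg (0 : Fin t → ℝ))⁻¹ * A) k k).re ≤ ‖A‖ :=
    fun k => beta_le_norm hA 0 h0 k
  have hsum : ∑ k, ((q k - (0:Fin t → ℝ) k) * (((1 + A * Dg (0:Fin t → ℝ))⁻¹ * A) k k).re)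
      ≤ ∑ k, q k * ‖A‖ := by
    refine Finset.sum_le_sum fun k _ => ?_
    simp only [Pi.zero_apply, sub_zero]
    exact mul_le_mul_of_nonneg_left (hβ k) (hq k)
  rw [hg0] at hsup
  calc gfun A q ≤ 0 + ∑ k, (q k - (0:Fin t → ℝ) k) *
        (((1 + A * Dg (0:Fin t → ℝ))⁻¹ * A) k k).re := hsup
    _ ≤ ∑ k, q k * ‖A‖ := by rw [zero_add]; exact hsum
    _ = (∑ k, q k) * ‖A‖ := by rw [Finset.sum_mul]

/-- the secant package used for dominated convergence. -/
lemma gfun_secant (hA : A.PosSemidef) (q0 q1 : Fin t → ℝ) (hq0 : ∀ k, 0 ≤ q0 k) (hq1 : ∀ k, 0 ≤ q1 k) :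
    (∀ n : ℕ,
      gfun A q1 - gfun A q0
        ≤ (gfun A (q0 + ((n:ℝ)+1)⁻¹ • (q1 - q0)) - gfun A q0) * ((n:ℝ)+1) ∧
      (gfun A (q0 + ((n:ℝ)+1)⁻¹ • (q1 - q0)) - gfun A q0) * ((n:ℝ)+1)
        ≤ ∑ k, (q1 k - q0 k) * (((1 + A * Dg q0)⁻¹ * A) k k).re) ∧
    Filter.Tendsto
      (fun n : ℕ => (gfun A (q0 + ((n:ℝ)+1)⁻¹ • (q1 - q0)) - gfun A q0) * ((n:ℝ)+1))
      Filter.atTop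
      (nhds (∑ k, (q1 k - q0 k) * (((1 + A * Dg q0)⁻¹ * A) k k).re)) := by
  obtain ⟨κ, hpos, hdec, htr⟩ := gfun_pencil hA q0 q1 hq0 hq1
  have hsn : ∀ n : ℕ, (0:ℝ) < ((n:ℝ)+1)⁻¹ := fun n => by positivity
  have hsn1 : ∀ n : ℕ, ((n:ℝ)+1)⁻¹ ≤ 1 := fun n => by
    rw [inv_le_one_iff₀]; right; exact le_add_of_nonneg_left (Nat.cast_nonneg n)
  have hquot : ∀ n : ℕ,
      (gfun A (q0 + ((n:ℝ)+1)⁻¹ • (q1 - q0)) - gfun A q0) * ((n:ℝ)+1)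
        = ∑ i, Real.log (1 + ((n:ℝ)+1)⁻¹ * κ i) * ((n:ℝ)+1) := by
    intro n
    rw [hdec _ (hsn n).le (hsn1 n)]
    rw [add_sub_cancel_left, Finset.sum_mul]
  constructor
  · intro n
    constructor
    · rw [hquot n]
      have h1 : q0 + (1:ℝ) • (q1 - q0) = q1 := by funext k; simp
      have hg1 := hdec 1 zero_le_one le_rfl
      rw [h1] at hg1
      rw [hg1]
      rw [add_sub_cancel_left]
      refine Finset.sum_le_sum fun i _ => ?_
      have hx : 0 < 1 + κ i := by simpa using hpos 1 zero_le_one le_rfl i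
      have := slog_concave hx (hsn n).le (hsn1 n)
      have h2 : ((n:ℝ)+1)⁻¹ * Real.log (1 + κ i) ≤ Real.log (1 + ((n:ℝ)+1)⁻¹ * κ i) := by
        simpa using this
      calc Real.log (1 + 1 * κ i) = Real.log (1 + κ i) := by norm_num
        _ = (((n:ℝ)+1)⁻¹ * Real.log (1 + κ i)) * ((n:ℝ)+1) := by
            field_simp
        _ ≤ Real.log (1 + ((n:ℝ)+1)⁻¹ * κ i) * ((n:ℝ)+1) := by
            apply mul_le_mul_of_nonneg_right h2
            positivity
    · rw [hquot n, ← htr]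
      refine Finset.sum_le_sum fun i _ => ?_
      have hp : 0 < 1 + ((n:ℝ)+1)⁻¹ * κ i := hpos _ (hsn n).le (hsn1 n) i
      calc Real.log (1 + ((n:ℝ)+1)⁻¹ * κ i) * ((n:ℝ)+1)
          ≤ (((n:ℝ)+1)⁻¹ * κ i) * ((n:ℝ)+1) := by
            apply mul_le_mul_of_nonneg_right (slog_le hp)
            positivity
        _ = κ i := by field_simp
  · have := tendsto_finset_sum (Finset.univ : Finset (Fin t))
      (fun i _ => tendsto_quot (κ i) (fun s h0 h1 => hpos s h0 h1 i))
    rw [← htr]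
    refine Filter.Tendsto.congr (fun n => (hquot n).symm) this

end Gfun

end Pencil

section Meas
variable {t : ℕ} {Ω : Type*} [MeasurableSpace Ω]
variable {S : Ω → Matrix (Fin t) (Fin t) ℂ}

lemma meas_entry (hS : Measurable S) (i j : Fin t) : Measurable fun ω => S ω i j :=
  (measurable_pi_apply j).comp ((measurable_pi_apply i).comp hS)

lemma meas_det {f : Ω → Matrix (Fin t) (Fin t) ℂ}
    (hf : ∀ i j, Measurable fun ω => f ω i j) : Measurable fun ω => (f ω).det := by
  simp_rw [Matrix.det_apply']
  refine Finset.measurable_sum _ fun σ _ => ?_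
  exact (Finset.measurable_prod _ fun i _ => hf (σ i) i).const_mul _

lemma meas_T (hS : Measurable S) (q : Fin t → ℝ) (i j : Fin t) :
    Measurable fun ω => (1 + S ω * Dg q) i j := by
  have h : (fun ω => (1 + S ω * Dg q) i j)
      = fun ω => (1 : Matrix (Fin t) (Fin t) ℂ) i j + ∑ l, S ω i l * Dg q l j := by
    funext ω; rw [Matrix.add_apply, Matrix.mul_apply]
  rw [h]
  exact Measurable.const_add
    (Finset.measurable_sum _ fun l _ => (meas_entry hS i l).mul_const _) _

lemma meas_G (hS : Measurable S) (q : Fin t → ℝ) :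
    Measurable fun ω => gfun (S ω) q := by
  unfold gfun
  exact Real.measurable_log.comp (Complex.measurable_re.comp (meas_det (meas_T hS q)))

lemma meas_gamma (hS : Measurable S) (q : Fin t → ℝ) (k : Fin t) :
    Measurable fun ω => (((1 + S ω * Dg q)⁻¹ * S ω) k k).re := by
  have hTinv : ∀ i j, Measurable fun ω => (1 + S ω * Dg q)⁻¹ i j := by
    intro i j
    have h : (fun ω => (1 + S ω * Dg q)⁻¹ i j)
        = fun ω => ((1 + S ω * Dg q).det)⁻¹ * (1 + S ω * Dg q).adjugate i j := by
      funext ω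
      rw [Matrix.inv_def, Matrix.smul_apply, Ring.inverse_eq_inv', smul_eq_mul]
    rw [h]
    refine Measurable.mul ((meas_det (meas_T hS q)).inv) ?_
    have h2 : (fun ω => (1 + S ω * Dg q).adjugate i j)
        = fun ω => ((1 + S ω * Dg q).updateRow j (Pi.single i 1)).det := by
      funext ω; rw [Matrix.adjugate_apply]
    rw [h2]
    refine meas_det fun a b => ?_
    by_cases hab : a = j
    · simp only [Matrix.updateRow_apply, hab, if_true]
      exact measurable_const
    · simp only [Matrix.updateRow_apply, hab, if_false]
      exact meas_T hS q a b
  have : (fun ω => (((1 + S ω * Dg q)⁻¹ * S ω) k k).re)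
      = fun ω => (∑ j, (1 + S ω * Dg q)⁻¹ k j * S ω j k).re := by
    funext ω; rw [Matrix.mul_apply]
  rw [this]
  refine Complex.measurable_re.comp ?_
  exact Finset.measurable_sum _ fun j _ => (hTinv k j).mul (meas_entry hS j k)

end Meas

end KT


/-- **Kuhn–Tucker conditions for the optimal diagonal power allocation.**
Let `S` be an integrable random Hermitian positive semidefinite `t × t` matrix and
`Ψ(q) = E[log det(I + S diag q)]`.  A feasible power allocation `q*` (nonnegative,
summing to `P`) maximizes `Ψ` over all feasible allocations if and only if there is a
constant `μ` with `E[((I + S diag q*)⁻¹ S)_{kk}] = μ` whenever `q*_k > 0` and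
`E[((I + S diag q*)⁻¹ S)_{kk}] ≤ μ` whenever `q*_k = 0`. -/
theorem kuhn_tucker_diagonal_covariance
    (t : ℕ) (ht : 0 < t)
    {Ω : Type*} [MeasurableSpace Ω] (ℙ : Measure Ω) [IsProbabilityMeasure ℙ]
    (S : Ω → Matrix (Fin t) (Fin t) ℂ) (hS_meas : Measurable S)
    (hS_psd : ∀ᵐ ω ∂ℙ, (S ω).PosSemidef)
    (hS_int : Integrable (fun ω => ‖S ω‖) ℙ)
    (P : ℝ) (hP : 0 < P)
    (Ψ : (Fin t → ℝ) → ℝ)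
    (hΨ : ∀ q : Fin t → ℝ, Ψ q =
      ∫ ω, Real.log ((1 + S ω * Matrix.diagonal (fun k => (q k : ℂ))).det.re) ∂ℙ)
    (qstar : Fin t → ℝ) (hqstar_nonneg : ∀ k, 0 ≤ qstar k)
    (hqstar_sum : ∑ k, qstar k = P) :
    (∀ q : Fin t → ℝ, (∀ k, 0 ≤ q k) → ∑ k, q k = P → Ψ q ≤ Ψ qstar) ↔
    (∃ μ : ℝ, ∀ k : Fin t,
      (0 < qstar k →
        (∫ ω, (((1 + S ω * Matrix.diagonal (fun j => (qstar j : ℂ)))⁻¹ * S ω) k k).re ∂ℙ)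
          = μ) ∧
      (qstar k = 0 →
        (∫ ω, (((1 + S ω * Matrix.diagonal (fun j => (qstar j : ℂ)))⁻¹ * S ω) k k).re ∂ℙ)
          ≤ μ)) := by
  classical
  have hΨ' : ∀ q : Fin t → ℝ, Ψ q = ∫ ω, KT.gfun (S ω) q ∂ℙ := hΨ
  have hG : ∀ q : Fin t → ℝ, Measurable fun ω => KT.gfun (S ω) q :=
    fun q => KT.meas_G hS_meas q
  have hGint : ∀ q : Fin t → ℝ, (∀ k, 0 ≤ q k) →
      Integrable (fun ω => KT.gfun (S ω) q) ℙ := by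
    intro q hq
    refine Integrable.mono' (hS_int.const_mul (∑ k, q k)) (hG q).aestronglyMeasurable ?_
    filter_upwards [hS_psd] with ω hω
    rw [Real.norm_eq_abs, abs_of_nonneg (KT.gfun_nonneg hω hq)]
    exact KT.gfun_le hω q hq
  set γ : Fin t → Ω → ℝ :=
    fun k ω => (((1 + S ω * KT.Dg qstar)⁻¹ * S ω) k k).re with hγdef
  have hγmeas : ∀ k, Measurable (γ k) := fun k => KT.meas_gamma hS_meas qstar k
  have hγint : ∀ k, Integrable (γ k) ℙ := by
    intro k
    refine Integrable.mono' hS_int (hγmeas k).aestronglyMeasurable ?_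
    filter_upwards [hS_psd] with ω hω
    rw [Real.norm_eq_abs, abs_of_nonneg (KT.beta_nonneg hω qstar hqstar_nonneg k)]
    exact KT.beta_le_norm hω qstar hqstar_nonneg k
  set F : Fin t → ℝ := fun k => ∫ ω, γ k ω ∂ℙ with hFdef
  constructor
  · -- optimality implies KKT
    intro hopt
    obtain ⟨k0, hk0⟩ : ∃ k, 0 < qstar k := by
      by_contra h
      push_neg at h
      have hz : ∀ k, qstar k = 0 := fun k => le_antisymm (h k) (hqstar_nonneg k)
      have : (0:ℝ) = P := by
        rw [← hqstar_sum]
        exact (Finset.sum_eq_zero fun k _ => hz k).symm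
      linarith
    have key : ∀ j k : Fin t, 0 < qstar k → F j ≤ F k := by
      intro j k hk
      rcases eq_or_ne j k with rfl | hjk
      · exact le_rfl
      set a := qstar k with hadef
      set q1 : Fin t → ℝ := qstar + a • (Pi.single j 1 - Pi.single k 1) with hq1def
      have hq1val : ∀ l, q1 l = qstar l
          + a * ((if l = j then (1:ℝ) else 0) - (if l = k then (1:ℝ) else 0)) := by
        intro l
        simp [hq1def, Pi.single_apply]
      have hq1nonneg : ∀ l, 0 ≤ q1 l := by
        intro l
        rw [hq1val l]
        by_cases hlj : l = j
        · subst hlj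
          simp [hjk]
          nlinarith [hqstar_nonneg l, hk]
        · by_cases hlk : l = k
          · subst hlk
            simp [hlj, hadef]
          · simp [hlj, hlk]
            exact hqstar_nonneg l
      have hq1sum : ∑ l, q1 l = P := by
        have : ∑ l, q1 l = ∑ l, qstar l
            + a * ((∑ l, if l = j then (1:ℝ) else 0) - (∑ l, if l = k then (1:ℝ) else 0)) := by
          rw [Finset.sum_congr rfl fun l _ => hq1val l]
          rw [Finset.sum_add_distrib, ← Finset.mul_sum, Finset.sum_sub_distrib]
        rw [this, Finset.sum_ite_eq' Finset.univ j fun _ => (1:ℝ),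
          Finset.sum_ite_eq' Finset.univ k fun _ => (1:ℝ)]
        simp [hqstar_sum]
      -- the perturbed allocations
      set qs : ℕ → Fin t → ℝ := fun n => qstar + ((n:ℝ)+1)⁻¹ • (q1 - qstar) with hqsdef
      have hsn : ∀ n : ℕ, (0:ℝ) < ((n:ℝ)+1)⁻¹ := fun n => by positivity
      have hsn1 : ∀ n : ℕ, ((n:ℝ)+1)⁻¹ ≤ 1 := fun n => by
        rw [inv_le_one_iff₀]; right; exact le_add_of_nonneg_left (Nat.cast_nonneg n)
      have hqs_nonneg : ∀ n l, 0 ≤ qs n l := by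
        intro n l
        have h1 := hqstar_nonneg l
        have h2 := hq1nonneg l
        have h3 := hsn n
        have h4 := hsn1 n
        simp only [hqsdef, Pi.add_apply, Pi.smul_apply, Pi.sub_apply, smul_eq_mul]
        nlinarith
      have hqs_sum : ∀ n, ∑ l, qs n l = P := by
        intro n
        have : ∑ l, qs n l = ∑ l, qstar l + ((n:ℝ)+1)⁻¹ * (∑ l, q1 l - ∑ l, qstar l) := by
          simp only [hqsdef, Pi.add_apply, Pi.smul_apply, Pi.sub_apply, smul_eq_mul]
          rw [Finset.sum_add_distrib, ← Finset.mul_sum, Finset.sum_sub_distrib]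
        rw [this, hq1sum, hqstar_sum]
        ring
      set u : ℕ → Ω → ℝ := fun n ω =>
        (KT.gfun (S ω) (qstar + ((n:ℝ)+1)⁻¹ • (q1 - qstar)) - KT.gfun (S ω) qstar)
          * ((n:ℝ)+1) with hudef
      set τ : Ω → ℝ := fun ω => ∑ l, (q1 l - qstar l) * γ l ω with hτdef
      have hτint : Integrable τ ℙ :=
        integrable_finset_sum _ fun l _ => (hγint l).const_mul _
      set bound : Ω → ℝ := fun ω =>
        |τ ω| + (KT.gfun (S ω) q1 + KT.gfun (S ω) qstar) with hbdef
      have hbound_int : Integrable bound ℙ :=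
        hτint.abs.add ((hGint q1 hq1nonneg).add (hGint qstar hqstar_nonneg))
      have humeas : ∀ n, AEStronglyMeasurable (u n) ℙ := by
        intro n
        exact (((hG _).sub (hG qstar)).mul_const _).aestronglyMeasurable
      have hae_bound : ∀ n, ∀ᵐ ω ∂ℙ, ‖u n ω‖ ≤ bound ω := by
        intro n
        filter_upwards [hS_psd] with ω hω
        obtain ⟨hsec, _⟩ := KT.gfun_secant hω qstar q1 hqstar_nonneg hq1nonneg
        obtain ⟨hlow, hup⟩ := hsec n
        have hg1 := KT.gfun_nonneg hω hq1nonneg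
        have hg0 := KT.gfun_nonneg hω hqstar_nonneg
        have hτle : u n ω ≤ |τ ω| := le_trans hup (le_abs_self _)
        have hτge : -(bound ω) ≤ u n ω := by
          have : KT.gfun (S ω) q1 - KT.gfun (S ω) qstar ≤ u n ω := hlow
          have hb : 0 ≤ |τ ω| := abs_nonneg _
          simp only [hbdef]
          nlinarith
        rw [Real.norm_eq_abs, abs_le]
        constructor
        · exact hτge
        · have : 0 ≤ KT.gfun (S ω) q1 + KT.gfun (S ω) qstar := by nlinarith
          simp only [hbdef]
          nlinarith
      have hae_tendsto : ∀ᵐ ω ∂ℙ,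
          Filter.Tendsto (fun n => u n ω) Filter.atTop (nhds (τ ω)) := by
        filter_upwards [hS_psd] with ω hω
        obtain ⟨_, htend⟩ := KT.gfun_secant hω qstar q1 hqstar_nonneg hq1nonneg
        exact htend
      have htend := MeasureTheory.tendsto_integral_of_dominated_convergence
        bound humeas hbound_int hae_bound hae_tendsto
      have hneg : ∀ n, ∫ ω, u n ω ∂ℙ ≤ 0 := by
        intro n
        have hle := hopt (qs n) (hqs_nonneg n) (hqs_sum n)
        rw [hΨ' (qs n), hΨ' qstar] at hle
        have hInt : ∫ ω, u n ω ∂ℙ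
            = ((∫ ω, KT.gfun (S ω) (qs n) ∂ℙ) - ∫ ω, KT.gfun (S ω) qstar ∂ℙ)
              * ((n:ℝ)+1) := by
          rw [← integral_sub (hGint (qs n) (hqs_nonneg n)) (hGint qstar hqstar_nonneg)]
          rw [← integral_mul_const]
        rw [hInt]
        apply mul_nonpos_of_nonpos_of_nonneg
        · linarith
        · positivity
      have hτ0 : ∫ ω, τ ω ∂ℙ ≤ 0 :=
        le_of_tendsto htend (Filter.Eventually.of_forall hneg)
      have hcalc : ∫ ω, τ ω ∂ℙ = ∑ l, (q1 l - qstar l) * F l := by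
        rw [hτdef]
        rw [integral_finset_sum _ fun l _ => (hγint l).const_mul _]
        exact Finset.sum_congr rfl fun l _ => integral_const_mul _ _
      have hdiff : ∑ l, (q1 l - qstar l) * F l = a * F j - a * F k := by
        have hl : ∀ l, q1 l - qstar l
            = a * ((if l = j then (1:ℝ) else 0) - (if l = k then (1:ℝ) else 0)) := by
          intro l; rw [hq1val l]; ring
        rw [Finset.sum_congr rfl fun l _ => by rw [hl l]]
        simp only [mul_sub, sub_mul, mul_ite, ite_mul, mul_zero, zero_mul, mul_one, one_mul]
        rw [Finset.sum_sub_distrib]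
        rw [Finset.sum_ite_eq' Finset.univ j fun l => a * F l,
          Finset.sum_ite_eq' Finset.univ k fun l => a * F l]
        simp
      rw [hcalc, hdiff] at hτ0
      nlinarith
    refine ⟨F k0, fun k => ⟨?_, ?_⟩⟩
    · intro hk
      exact le_antisymm (key k k0 hk0) (key k0 k hk)
    · intro hk
      exact key k k0 hk0
  · -- KKT implies optimality
    rintro ⟨μ, hμ⟩ q hq hsum
    have hsup : ∀ᵐ ω ∂ℙ, KT.gfun (S ω) q
        ≤ KT.gfun (S ω) qstar + ∑ l, (q l - qstar l) * γ l ω := by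
      filter_upwards [hS_psd] with ω hω
      exact KT.gfun_supergrad hω qstar q hqstar_nonneg hq
    have hRHSint : Integrable
        (fun ω => KT.gfun (S ω) qstar + ∑ l, (q l - qstar l) * γ l ω) ℙ :=
      (hGint qstar hqstar_nonneg).add
        (integrable_finset_sum _ fun l _ => (hγint l).const_mul _)
    have h1 : Ψ q ≤ Ψ qstar + ∑ l, (q l - qstar l) * F l := by
      rw [hΨ' q, hΨ' qstar]
      calc ∫ ω, KT.gfun (S ω) q ∂ℙ
          ≤ ∫ ω, (KT.gfun (S ω) qstar + ∑ l, (q l - qstar l) * γ l ω) ∂ℙ :=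
            integral_mono_ae (hGint q hq) hRHSint hsup
        _ = (∫ ω, KT.gfun (S ω) qstar ∂ℙ) + ∑ l, (q l - qstar l) * F l := by
            rw [integral_add (hGint qstar hqstar_nonneg)
              (integrable_finset_sum _ fun l _ => (hγint l).const_mul _)]
            congr 1
            rw [integral_finset_sum _ fun l _ => (hγint l).const_mul _]
            exact Finset.sum_congr rfl fun l _ => integral_const_mul _ _
    have h2 : ∑ l, (q l - qstar l) * F l ≤ 0 := by
      have hle : ∀ l, (q l - qstar l) * F l ≤ (q l - qstar l) * μ := by
        intro l
        rcases (hqstar_nonneg l).lt_or_eq with hpos | hzero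
        · have hFl : F l = μ := (hμ l).1 hpos
          rw [hFl]
        · have hFl : F l ≤ μ := (hμ l).2 hzero.symm
          have hql : 0 ≤ q l := hq l
          rw [← hzero, sub_zero]
          exact mul_le_mul_of_nonneg_left hFl hql
      calc ∑ l, (q l - qstar l) * F l ≤ ∑ l, (q l - qstar l) * μ :=
            Finset.sum_le_sum fun l _ => hle l
        _ = (∑ l, (q l - qstar l)) * μ := (Finset.sum_mul _ _ _).symm
        _ = 0 := by
            rw [Finset.sum_sub_distrib, hsum, hqstar_sum]
            ring
    linarith
end

section
/- Let a, b > 0 with a ≠ b, and define f(x) = e^{1/x} · ∫_{1/x}^{∞} t^{-1} e^{-t} dt for x > 0. Then ∫_{0}^{∞} e^{-x} / ((1 + a x)(1 + b x)) dx = (f(a) − f(b)) / (a − b). -/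
open MeasureTheory

private lemma integrableOn_pole (a : ℝ) (ha : 0 < a) :
    IntegrableOn (fun x => a * Real.exp (-x) / (1 + a * x)) (Set.Ioi (0:ℝ)) := by
  have hexp : IntegrableOn (fun x => a * Real.exp (-x)) (Set.Ioi (0:ℝ)) := by
    have := (exp_neg_integrableOn_Ioi 0 one_pos).const_mul a
    simpa [IntegrableOn] using this
  refine hexp.mono' ?_ ?_
  · apply ContinuousOn.aestronglyMeasurable ?_ measurableSet_Ioi
    apply ContinuousOn.div
    · exact (continuous_const.mul (Real.continuous_exp.comp continuous_neg)).continuousOn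
    · exact (continuous_const.add (continuous_const.mul continuous_id)).continuousOn
    · intro x hx
      have : (0:ℝ) < 1 + a * x := by nlinarith [Set.mem_Ioi.mp hx]
      exact ne_of_gt this
  · filter_upwards [ae_restrict_mem measurableSet_Ioi] with x hx
    have hx0 : (0:ℝ) < x := hx
    have hden : (1:ℝ) ≤ 1 + a * x := by nlinarith
    have hnum : 0 ≤ a * Real.exp (-x) := by positivity
    rw [Real.norm_eq_abs, abs_div, abs_of_nonneg hnum,
      abs_of_pos (lt_of_lt_of_le one_pos hden)]
    calc a * Real.exp (-x) / (1 + a * x) ≤ a * Real.exp (-x) / 1 :=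
          div_le_div_of_nonneg_left hnum one_pos hden
        _ = a * Real.exp (-x) := by ring

private lemma single_pole (a : ℝ) (ha : 0 < a) :
    Real.exp (1 / a) * ∫ t in Set.Ioi (1 / a), t⁻¹ * Real.exp (-t)
      = ∫ x in Set.Ioi (0:ℝ), a * Real.exp (-x) / (1 + a * x) := by
  have hmp := measurePreserving_add_right (volume : Measure ℝ) (1 / a)
  have hemb := (Homeomorph.addRight (1 / a)).measurableEmbedding
  have hpre : (· + 1/a) ⁻¹' Set.Ioi (1/a) = Set.Ioi (0:ℝ) := by
    ext x; simp
  have hshift : (∫ t in Set.Ioi (1/a), t⁻¹ * Real.exp (-t))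
      = ∫ x in Set.Ioi (0:ℝ), (x + 1/a)⁻¹ * Real.exp (-(x + 1/a)) := by
    rw [← hmp.setIntegral_preimage_emb hemb (fun t => t⁻¹ * Real.exp (-t)) _, hpre]
  rw [hshift, ← integral_const_mul]
  apply setIntegral_congr_fun measurableSet_Ioi
  intro x hx
  have hx0 : (0:ℝ) < x := hx
  have hden : (0:ℝ) < 1 + a * x := by nlinarith
  have hxa : x + 1/a = (1 + a * x) / a := by field_simp; ring
  have hexp : Real.exp (1/a) * Real.exp (-(x + 1/a)) = Real.exp (-x) := by
    rw [← Real.exp_add]; ring_nf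
  calc Real.exp (1/a) * ((x + 1/a)⁻¹ * Real.exp (-(x + 1/a)))
      = (x + 1/a)⁻¹ * (Real.exp (1/a) * Real.exp (-(x + 1/a))) := by ring
    _ = (x + 1/a)⁻¹ * Real.exp (-x) := by rw [hexp]
    _ = a * Real.exp (-x) / (1 + a * x) := by
        rw [hxa]; field_simp

/-- **Key integral identity for the beamforming condition (off-diagonal terms).**
For `a, b > 0` with `a ≠ b`, and `f(x) = e^{1/x} ∫_{1/x}^∞ t⁻¹ e^{-t} dt`,
`∫_0^∞ e^{-x} / ((1 + a x)(1 + b x)) dx = (f(a) - f(b))/(a - b)`. -/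
theorem exp_integral_two_poles
    (a b : ℝ) (ha : 0 < a) (hb : 0 < b) (hab : a ≠ b)
    (f : ℝ → ℝ)
    (hf : ∀ x : ℝ, 0 < x →
      f x = Real.exp (1 / x) * ∫ t in Set.Ioi (1 / x), t⁻¹ * Real.exp (-t)) :
    ∫ x in Set.Ioi (0 : ℝ), Real.exp (-x) / ((1 + a * x) * (1 + b * x))
      = (f a - f b) / (a - b) := by
  have hab' : a - b ≠ 0 := sub_ne_zero.mpr hab
  have key : ∀ x ∈ Set.Ioi (0:ℝ),
      Real.exp (-x) / ((1 + a * x) * (1 + b * x))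
        = (a - b)⁻¹ * (a * Real.exp (-x) / (1 + a * x)
            - b * Real.exp (-x) / (1 + b * x)) := by
    intro x hx
    have hx0 : (0:ℝ) < x := hx
    have hda : (0:ℝ) < 1 + a * x := by nlinarith
    have hdb : (0:ℝ) < 1 + b * x := by nlinarith
    field_simp
    ring
  rw [setIntegral_congr_fun measurableSet_Ioi key, integral_const_mul,
    integral_sub (integrableOn_pole a ha) (integrableOn_pole b hb),
    ← single_pole a ha, ← single_pole b hb, ← hf a ha, ← hf b hb,
    div_eq_mul_inv, mul_comm]
end
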